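/- arXiv:2510.11206 — 3 statements merged into one kernel-verified Lean document; each statement's English description precedes it below -/
import Mathlib

section
/- Let X be a real Hilbert space, n ≥ 1, and F : X → ℝⁿ a C² map such that dF|_u is surjective for every u ∈ X. Suppose there exists C > 0 such that ‖G(u)⁻¹‖ ≤ C(1+‖u‖)² for all u ∈ X, where G(u) := dF|_u ∘ dF|_u*. Then for every u⁰ ∈ X and every C¹ curve γ : [0,1] → ℝⁿ with γ(0) = F(u⁰), the path-lifting equation u'(s) = dF|_{u(s)}* (G(u(s)))⁻¹ γ'(s) with initial condition u(0) = u⁰ has a solution defined on all of [0,1]; in particular F is surjective. -/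
open Set ContinuousLinearMap Filter Metric
open scoped RealInnerProductSpace Topology NNReal

/-- The Gramian `G(u) := dF|_u ∘ dF|_u*` of a map `F` from a real Hilbert space
to `ℝⁿ`, a linear operator on `ℝⁿ`. -/
noncomputable def gram {X : Type*} [NormedAddCommGroup X] [InnerProductSpace ℝ X]
    [CompleteSpace X] {n : ℕ} (F : X → EuclideanSpace ℝ (Fin n)) (u : X) :
    EuclideanSpace ℝ (Fin n) →L[ℝ] EuclideanSpace ℝ (Fin n) :=
  (fderiv ℝ F u).comp (ContinuousLinearMap.adjoint (fderiv ℝ F u))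

set_option linter.unusedSectionVars false
set_option linter.unusedVariables false

section ODE
variable {X : Type*} [NormedAddCommGroup X] [NormedSpace ℝ X] [CompleteSpace X]

lemma hasDerivWithinAt_singleton_any
    {f : ℝ → X} {v : X} {x : ℝ} : HasDerivWithinAt f v {x} x := by
  rw [← hasDerivWithinAt_diff_singleton, Set.diff_self]
  rw [hasDerivWithinAt_iff_hasFDerivWithinAt, HasFDerivWithinAt, nhdsWithin_empty,
    hasFDerivAtFilter_iff_isLittleO]
  rw [Filter.bot_prod]
  exact Asymptotics.isLittleO_bot _ _

lemma hasDerivWithinAt_Ici_of_Icc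
    {f : ℝ → X} {v : X} {a b x : ℝ} (hx : x ∈ Ico a b)
    (h : HasDerivWithinAt f v (Icc a b) x) : HasDerivWithinAt f v (Ici x) x :=
  h.mono_of_mem_nhdsWithin (Icc_mem_nhdsGE_of_mem hx)

lemma hasDerivWithinAt_Icc_enlarge
    {f : ℝ → X} {v : X} {a t T x : ℝ} (htT : t ≤ T) (hx : x ∈ Icc a t) (hxt : x < t)
    (h : HasDerivWithinAt f v (Icc a t) x) : HasDerivWithinAt f v (Icc a T) x := by
  refine h.mono_of_mem_nhdsWithin ?_
  rw [mem_nhdsWithin]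
  exact ⟨Iio t, isOpen_Iio, hxt, fun y hy => ⟨hy.2.1, le_of_lt hy.1⟩⟩

lemma gronwallBound_le_of_mem_Icc {K ε x : ℝ} (hK : 0 ≤ K) (hε : 0 ≤ ε)
    (hx0 : 0 ≤ x) (hx1 : x ≤ 1) : gronwallBound 0 K ε x ≤ ε * Real.exp K := by
  rcases eq_or_ne K 0 with hK0 | hK0
  · subst hK0
    rw [gronwallBound_K0]
    simpa [Real.exp_zero] using mul_le_mul_of_nonneg_left hx1 hε
  · rw [gronwallBound_of_K_ne_0 hK0]
    have h1 : Real.exp (K * x) ≤ Real.exp K := by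
      apply Real.exp_le_exp.mpr; nlinarith
    have hm : Real.exp (-K) * Real.exp K = 1 := by rw [← Real.exp_add]; simp
    have h2 : Real.exp K - 1 ≤ K * Real.exp K := by
      nlinarith [Real.add_one_le_exp (-K), hm, Real.exp_pos K]
    have hKpos : 0 < K := lt_of_le_of_ne hK (Ne.symm hK0)
    simp only [zero_mul, zero_add]
    calc ε / K * (Real.exp (K * x) - 1) ≤ ε / K * (Real.exp K - 1) := by
          apply mul_le_mul_of_nonneg_left _ (div_nonneg hε hK)
          · linarith
      _ ≤ ε / K * (K * Real.exp K) := by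
          apply mul_le_mul_of_nonneg_left h2 (div_nonneg hε hK)
      _ = ε * Real.exp K := by field_simp

set_option maxHeartbeats 1600000 in
theorem global_sol (V : ℝ → X → X) (K : ℝ) (hK : 0 ≤ K)
    (hgrow : ∀ s x, ‖V s x‖ ≤ K * (1 + ‖x‖))
    (hlip : ∀ x₀ : X, ∃ r > (0:ℝ), ∃ L : NNReal, ∀ s : ℝ,
      LipschitzOnWith L (V s) (closedBall x₀ r))
    (hcont : ∀ x, Continuous fun s => V s x)
    (u0 : X) :
    ∃ u : ℝ → X, u 0 = u0 ∧
      ∀ s ∈ Icc (0:ℝ) 1, HasDerivWithinAt u (V s (u s)) (Icc 0 1) s := by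
  classical
  set Sol : (ℝ → X) → ℝ → Prop := fun u t => u 0 = u0 ∧
    ∀ s ∈ Icc 0 t, HasDerivWithinAt u (V s (u s)) (Icc 0 t) s with hSoldef
  have hrestrict : ∀ u t t', 0 ≤ t' → t' ≤ t → Sol u t → Sol u t' := by
    intro u t t' h0 h1 hu
    exact ⟨hu.1, fun s hs =>
      (hu.2 s ⟨hs.1, hs.2.trans h1⟩).mono (Icc_subset_Icc_right h1)⟩
  -- a priori bound
  set R : ℝ := ‖u0‖ + K * (1 + ‖u0‖) * Real.exp K with hRdef
  clear_value R
  have hεnn : 0 ≤ K * (1 + ‖u0‖) := by positivity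
  have hapriori : ∀ u t, t ∈ Icc (0:ℝ) 1 → Sol u t → ∀ s ∈ Icc 0 t, ‖u s‖ ≤ R := by
    intro u t ht hu s hs
    have hucont : ContinuousOn u (Icc 0 t) := fun y hy => (hu.2 y hy).continuousWithinAt
    have hgron := norm_le_gronwallBound_of_norm_deriv_right_le (f := fun s' => u s' - u 0)
      (f' := fun s' => V s' (u s')) (δ := 0) (K := K) (ε := K * (1 + ‖u0‖)) (a := 0) (b := t)
      (hucont.sub continuousOn_const)
      (fun x hx => hasDerivWithinAt_Ici_of_Icc hx
        (((hu.2 x (Ico_subset_Icc_self hx))).sub_const _))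
      (by simp)
      (fun x hx => by
        have h1 := hgrow x (u x)
        have h2 : ‖u x‖ - ‖u 0‖ ≤ ‖u x - u 0‖ := norm_sub_norm_le _ _
        have h3 : ‖u 0‖ = ‖u0‖ := by rw [hu.1]
        nlinarith [norm_nonneg (u x - u 0)])
      s hs
    have h4 := gronwallBound_le_of_mem_Icc (x := s - 0) hK hεnn
      (by simpa using hs.1) (by simp; linarith [hs.2, ht.2])
    have h5 : ‖u s‖ - ‖u 0‖ ≤ ‖u s - u 0‖ := norm_sub_norm_le _ _
    have h6 : ‖u 0‖ = ‖u0‖ := by rw [hu.1]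
    rw [hRdef]; linarith [le_trans hgron h4]
  -- uniqueness
  have huniq : ∀ u w t, t ∈ Icc (0:ℝ) 1 → Sol u t → Sol w t → EqOn u w (Icc 0 t) := by
    intro u w t ht hu hw
    set A := {r | r ∈ Icc 0 t ∧ EqOn u w (Icc 0 r)} with hA
    have h0A : (0:ℝ) ∈ A := by
      refine ⟨⟨le_rfl, ht.1⟩, fun y hy => ?_⟩
      have : y = 0 := le_antisymm hy.2 hy.1
      rw [this, hu.1, hw.1]
    have hbddA : BddAbove A := ⟨t, fun r hr => hr.1.2⟩
    set τ := sSup A with hτdef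
    have hτ : τ ∈ Icc 0 t := ⟨le_csSup hbddA h0A, csSup_le ⟨0, h0A⟩ fun r hr => hr.1.2⟩
    have hlt : ∀ s, 0 ≤ s → s < τ → u s = w s := by
      intro s h0s hsτ
      obtain ⟨r, hrA, hsr⟩ := exists_lt_of_lt_csSup ⟨0, h0A⟩ hsτ
      exact hrA.2 ⟨h0s, hsr.le⟩
    clear_value τ
    have hcu : ContinuousWithinAt u (Icc 0 t) τ := (hu.2 τ hτ).continuousWithinAt
    have hcw : ContinuousWithinAt w (Icc 0 t) τ := (hw.2 τ hτ).continuousWithinAt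
    have hτeq : u τ = w τ := by
      rcases eq_or_lt_of_le hτ.1 with h0 | h0
      · rw [← h0, hu.1, hw.1]
      · have hne : (𝓝[Ico 0 τ] τ).NeBot := by
          rw [← mem_closure_iff_nhdsWithin_neBot, closure_Ico (ne_of_lt h0)]
          exact ⟨hτ.1, le_rfl⟩
        have hsub : Ico 0 τ ⊆ Icc 0 t := fun y hy => ⟨hy.1, hy.2.le.trans hτ.2⟩
        have h1 : Tendsto u (𝓝[Ico 0 τ] τ) (𝓝 (u τ)) := hcu.mono hsub
        have h2 : Tendsto w (𝓝[Ico 0 τ] τ) (𝓝 (w τ)) := hcw.mono hsub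
        have hev : u =ᶠ[𝓝[Ico 0 τ] τ] w :=
          eventually_mem_nhdsWithin.mono fun y hy => hlt y hy.1 hy.2
        exact tendsto_nhds_unique h1 (h2.congr' hev.symm)
    have hτA : τ ∈ A := by
      refine ⟨hτ, fun s hs => ?_⟩
      rcases eq_or_lt_of_le hs.2 with h | h
      · rw [h]; exact hτeq
      · exact hlt s hs.1 h
    rcases eq_or_lt_of_le hτ.2 with hτt | hτt
    · rw [← hτt]; exact hτA.2
    · exfalso
      obtain ⟨r, hr, Lp, hLp⟩ := hlip (u τ)
      obtain ⟨δ1, hδ1, hδ1'⟩ := Metric.continuousWithinAt_iff.mp hcu r hr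
      obtain ⟨δ2, hδ2, hδ2'⟩ := Metric.continuousWithinAt_iff.mp hcw r hr
      set δ := min (min δ1 δ2 / 2) (t - τ) with hδdef
      have hδ : 0 < δ := lt_min (by positivity) (by linarith)
      clear_value δ
      have hδle : δ < min δ1 δ2 := by
        rw [hδdef]
        have h0 : 0 < min δ1 δ2 := lt_min hδ1 hδ2
        have h1 : min (min δ1 δ2 / 2) (t - τ) ≤ min δ1 δ2 / 2 := min_le_left _ _
        linarith
      have hub : τ + δ ≤ t := by
        have := min_le_right (min δ1 δ2 / 2) (t - τ); rw [← hδdef] at this; linarith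
      have hsubset : Icc τ (τ + δ) ⊆ Icc 0 t :=
        fun y hy => ⟨hτ.1.trans hy.1, hy.2.trans hub⟩
      have hmemIcc : ∀ s ∈ Ico τ (τ + δ), s ∈ Icc 0 t :=
        fun s hs => hsubset ⟨hs.1, hs.2.le⟩
      have hdistm : ∀ s ∈ Ico τ (τ + δ), dist s τ < min δ1 δ2 := by
        intro s hs
        rw [Real.dist_eq, abs_of_nonneg (by linarith [hs.1])]
        have := hs.2; linarith [hδle]
      have key : EqOn u w (Icc τ (τ + δ)) := by
        refine ODE_solution_unique_of_mem_Icc_right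
          (v := V) (K := Lp) (s := fun _ => closedBall (u τ) r)
          (fun t' _ => hLp t')
          (fun y hy => (hu.2 y (hsubset hy)).continuousWithinAt.mono hsubset)
          (fun s hs => hasDerivWithinAt_Ici_of_Icc
            ⟨hτ.1.trans hs.1, lt_of_lt_of_le hs.2 hub⟩ (hu.2 s (hmemIcc s hs)))
          (fun s hs => mem_closedBall.mpr (le_of_lt (hδ1' (hmemIcc s hs)
            (lt_of_lt_of_le (hdistm s hs) (min_le_left _ _)))))
          (fun y hy => (hw.2 y (hsubset hy)).continuousWithinAt.mono hsubset)
          (fun s hs => hasDerivWithinAt_Ici_of_Icc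
            ⟨hτ.1.trans hs.1, lt_of_lt_of_le hs.2 hub⟩ (hw.2 s (hmemIcc s hs)))
          (fun s hs => mem_closedBall.mpr (by
            have := hδ2' (hmemIcc s hs) (lt_of_lt_of_le (hdistm s hs) (min_le_right _ _))
            rw [← hτeq] at this
            exact this.le))
          hτeq
      have hτδA : τ + δ ∈ A := by
        refine ⟨⟨by linarith [hτ.1], hub⟩, ?_⟩
        rw [show Icc (0:ℝ) (τ + δ) = Icc 0 τ ∪ Icc τ (τ + δ) from
          (Icc_union_Icc_eq_Icc hτ.1 (by linarith [hτ.1])).symm]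
        exact hτA.2.union key
      have := le_csSup hbddA hτδA
      rw [← hτdef] at this
      linarith
  -- the set of reachable times
  set S : Set ℝ := {t | t ∈ Icc (0:ℝ) 1 ∧ ∃ u, Sol u t} with hSdef
  have h0S : (0:ℝ) ∈ S := by
    refine ⟨⟨le_rfl, zero_le_one⟩, fun _ => u0, rfl, fun s hs => ?_⟩
    have hs0 : s = 0 := le_antisymm hs.2 hs.1
    subst hs0
    rw [show Icc (0:ℝ) 0 = {0} from Icc_self 0]
    exact hasDerivWithinAt_singleton_any
  have hbdd : BddAbove S := ⟨1, fun t ht => ht.1.2⟩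
  set T := sSup S with hTdef
  have hTmem : T ∈ Icc (0:ℝ) 1 := ⟨le_csSup hbdd h0S, csSup_le ⟨0, h0S⟩ fun t ht => ht.1.2⟩
  have hIcoS : ∀ s ∈ Ico (0:ℝ) T, s ∈ S := by
    intro s hs
    obtain ⟨t, htS, hst⟩ := exists_lt_of_lt_csSup ⟨0, h0S⟩ hs.2
    obtain ⟨u, hu⟩ := htS.2
    exact ⟨⟨hs.1, hst.le.trans htS.1.2⟩, u, hrestrict u t s hs.1 hst.le hu⟩
  clear_value T
  set W : ℝ → ℝ → X := fun t => if h : ∃ u, Sol u t then h.choose else fun _ => u0 with hWdef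
  have hW : ∀ t, t ∈ S → Sol (W t) t := by
    intro t ht
    have h : ∃ u, Sol u t := ht.2
    simp only [hWdef, dif_pos h]
    exact h.choose_spec
  set U : ℝ → X := fun s => W s s with hUdef
  have hUW : ∀ t, t ∈ S → EqOn U (W t) (Icc 0 t) := by
    intro t ht s hs
    have hsS : s ∈ S := ⟨⟨hs.1, hs.2.trans ht.1.2⟩, W t, hrestrict _ t s hs.1 hs.2 (hW t ht)⟩
    exact huniq (W s) (W t) s hsS.1 (hW s hsS)
      (hrestrict _ t s hs.1 hs.2 (hW t ht)) ⟨hs.1, le_rfl⟩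
  have hUsol : ∀ t, t ∈ S → Sol U t := by
    intro t ht
    constructor
    · have h0 : (0:ℝ) ∈ Icc 0 t := ⟨le_rfl, ht.1.1⟩
      rw [hUW t ht h0]; exact (hW t ht).1
    · intro s hs
      have hder := (hW t ht).2 s hs
      rw [show V s (U s) = V s (W t s) from by rw [hUW t ht hs]]
      exact hder.congr (fun y hy => hUW t ht hy) (hUW t ht hs)
  -- T is in S
  have hTS : T ∈ S := by
    rcases eq_or_lt_of_le hTmem.1 with h0T | h0T
    · exact h0T ▸ h0S
    · set Kd := K * (1 + R) with hKddef
      clear_value Kd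
      have hR0 : 0 ≤ R := by
        rw [hRdef]
        nlinarith [norm_nonneg u0, mul_nonneg hεnn (Real.exp_pos K).le]
      have hKd0 : 0 ≤ Kd := by rw [hKddef]; positivity
      have hUbound : ∀ s ∈ Ico (0:ℝ) T, ‖U s‖ ≤ R := by
        intro s hs
        have hsS := hIcoS s hs
        exact hapriori U s hsS.1 (hUsol s hsS) s ⟨hs.1, le_rfl⟩
      have hUderiv : ∀ s ∈ Ioo (0:ℝ) T, HasDerivAt U (V s (U s)) s := by
        intro s hs
        have hst : s < (s + T) / 2 := by linarith [hs.2]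
        have htT : (s + T) / 2 < T := by linarith [hs.2]
        have htS : (s + T) / 2 ∈ S := hIcoS _ ⟨by linarith [hs.1], htT⟩
        have := (hUsol _ htS).2 s ⟨hs.1.le, hst.le⟩
        exact this.hasDerivAt (Icc_mem_nhds hs.1 hst)
      have hVnorm : ∀ s ∈ Ico (0:ℝ) T, ‖V s (U s)‖ ≤ Kd := by
        intro s hs
        refine le_trans (hgrow s (U s)) ?_
        rw [hKddef]
        have := hUbound s hs
        nlinarith
      have hdist : ∀ x ∈ Ico (0:ℝ) T, ∀ y ∈ Ico (0:ℝ) T, dist (U x) (U y) ≤ Kd * dist x y := by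
        have main : ∀ x ∈ Ico (0:ℝ) T, ∀ y ∈ Ico (0:ℝ) T, x ≤ y →
            dist (U x) (U y) ≤ Kd * dist x y := by
          intro x hx y hy hxy
          have hyS := hIcoS y hy
          have hsol := hUsol y hyS
          have hbound : ∀ z ∈ Icc (0:ℝ) y, ‖V z (U z)‖ ≤ Kd := fun z hz =>
            hVnorm z ⟨hz.1, lt_of_le_of_lt hz.2 hy.2⟩
          have := Convex.norm_image_sub_le_of_norm_hasDerivWithin_le
            (f := U) (f' := fun z => V z (U z)) (C := Kd)
            (fun z hz => hsol.2 z hz) hbound (convex_Icc 0 y)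
            (⟨hx.1, hxy⟩ : x ∈ Icc (0:ℝ) y) (⟨hy.1, le_rfl⟩ : y ∈ Icc (0:ℝ) y)
          rw [dist_comm, dist_eq_norm, Real.dist_eq]
          calc ‖U y - U x‖ ≤ Kd * ‖y - x‖ := this
            _ = Kd * |x - y| := by rw [norm_sub_rev]; rfl
        intro x hx y hy
        rcases le_total x y with h | h
        · exact main x hx y hy h
        · rw [dist_comm, dist_comm x y]; exact main y hy x hx h
      -- Cauchy sequence towards T
      have hdivT : Tendsto (fun N : ℕ => T / ((N:ℝ) + 1)) atTop (𝓝 0) :=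
        Tendsto.div_atTop tendsto_const_nhds
          (tendsto_atTop_add_const_right atTop 1 tendsto_natCast_atTop_atTop)
      set a : ℕ → ℝ := fun k => T - T / (k + 1) with hadef
      clear_value a
      have haIco : ∀ k, a k ∈ Ico (0:ℝ) T := by
        intro k
        have hk1 : (1:ℝ) ≤ (k:ℝ) + 1 := by exact_mod_cast Nat.one_le_iff_ne_zero.mpr (Nat.succ_ne_zero k)
        have hpos : (0:ℝ) < (k:ℝ) + 1 := by linarith
        constructor
        · rw [hadef]; simp only [sub_nonneg]
          rw [div_le_iff₀ hpos]; nlinarith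
        · rw [hadef]; simp only [sub_lt_self_iff]
          exact div_pos h0T hpos
      have hadist : ∀ k N, N ≤ k → T - a k ≤ T / (N + 1) := by
        intro k N hNk
        have h1 : (0:ℝ) < (N:ℝ) + 1 := by positivity
        have h2 : (0:ℝ) < (k:ℝ) + 1 := by positivity
        have h3 : ((N:ℝ) + 1) ≤ ((k:ℝ) + 1) := by exact_mod_cast Nat.succ_le_succ hNk
        rw [hadef]
        simp only [sub_sub_cancel]
        exact div_le_div_of_nonneg_left h0T.le h1 h3
      have hcseq : CauchySeq (fun k => U (a k)) := by
        refine cauchySeq_of_le_tendsto_0 (fun N => Kd * (2 * (T / (N + 1)))) ?_ ?_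
        · intro n m N hn hm
          have h1 := hdist (a n) (haIco n) (a m) (haIco m)
          have h2 : dist (a n) (a m) ≤ 2 * (T / (N + 1)) := by
            have hn' := hadist n N hn
            have hm' := hadist m N hm
            have h3 : 0 ≤ T - a n := by linarith [(haIco n).2]
            have h4 : 0 ≤ T - a m := by linarith [(haIco m).2]
            have h5 : 0 ≤ T / ((N:ℝ) + 1) := div_nonneg h0T.le (by positivity)
            rw [Real.dist_eq, abs_le]
            constructor <;> nlinarith [hn', hm', h3, h4, h5]
          calc dist (U (a n)) (U (a m)) ≤ Kd * dist (a n) (a m) := h1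
            _ ≤ Kd * (2 * (T / (N + 1))) := by
                exact mul_le_mul_of_nonneg_left h2 hKd0
        · have := (hdivT.const_mul 2).const_mul Kd
          simpa using this
      obtain ⟨Lv, hLv⟩ := cauchySeq_tendsto_of_complete hcseq
      have hUL : ∀ s ∈ Ico (0:ℝ) T, dist (U s) Lv ≤ Kd * (T - s) := by
        intro s hs
        have h1 : Tendsto (fun k => dist (U s) (U (a k))) atTop (𝓝 (dist (U s) Lv)) :=
          tendsto_const_nhds.dist hLv
        have h2 : Tendsto (fun k : ℕ => Kd * ((T - s) + T / (k + 1))) atTop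
            (𝓝 (Kd * ((T - s) + 0))) := (tendsto_const_nhds.add hdivT).const_mul Kd
        have h3 : ∀ k, dist (U s) (U (a k)) ≤ Kd * ((T - s) + T / (k + 1)) := by
          intro k
          have h4 := hdist s hs (a k) (haIco k)
          have h5 : dist s (a k) ≤ (T - s) + T / (k + 1) := by
            have h6 := hadist k k le_rfl
            have h7 : 0 ≤ T - a k := by linarith [(haIco k).2]
            have h8 : 0 ≤ T - s := by linarith [hs.2]
            rw [Real.dist_eq, abs_le]
            constructor <;> nlinarith [h6, h7, h8]
          exact le_trans h4 (mul_le_mul_of_nonneg_left h5 hKd0)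
        have := le_of_tendsto_of_tendsto' h1 h2 h3
        simpa using this
      have hULtendsto : Tendsto U (𝓝[Ico 0 T] T) (𝓝 Lv) := by
        rw [tendsto_iff_dist_tendsto_zero]
        apply squeeze_zero' (Eventually.of_forall fun s => dist_nonneg)
          (eventually_mem_nhdsWithin.mono fun s hs => hUL s hs)
        have hcont2 : Tendsto (fun s : ℝ => Kd * (T - s)) (𝓝[Ico 0 T] T) (𝓝 (Kd * (T - T))) :=
          ((tendsto_const_nhds.sub tendsto_id).const_mul Kd).mono_left nhdsWithin_le_nhds
        simpa using hcont2
      set Ub : ℝ → X := fun s => if s < T then U s else Lv with hUbdef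
      have hUbeq : ∀ s, s < T → Ub s = U s := fun s hs => if_pos hs
      have hUbT : Ub T = Lv := if_neg (lt_irrefl T)
      refine ⟨hTmem, Ub, ?_, ?_⟩
      · rw [hUbeq 0 h0T]; exact (hUsol 0 h0S).1
      · intro s hs
        rcases lt_or_eq_of_le hs.2 with hsT | hsT
        · have hst : s < (s + T) / 2 := by linarith
          have htT : (s + T) / 2 < T := by linarith
          have htS : (s + T) / 2 ∈ S := hIcoS _ ⟨by linarith [hs.1], htT⟩
          have hbase := (hUsol _ htS).2 s ⟨hs.1, hst.le⟩
          have h2 : HasDerivWithinAt U (V s (U s)) (Icc 0 T) s :=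
            hasDerivWithinAt_Icc_enlarge htT.le ⟨hs.1, hst.le⟩ hst hbase
          have hev : Ub =ᶠ[𝓝[Icc 0 T] s] U :=
            eventuallyEq_of_mem (mem_nhdsWithin_of_mem_nhds (Iio_mem_nhds hsT))
              fun y hy => if_pos hy
          rw [show Ub s = U s from hUbeq s hsT]
          exact h2.congr_of_eventuallyEq hev (hUbeq s hsT)
        · -- s = s
          subst hsT
          have hIooTS : Ioo (0:ℝ) s ∈ 𝓝[<] s := by
            rw [mem_nhdsWithin]
            exact ⟨Ioi 0, isOpen_Ioi, h0T, fun y hy => ⟨hy.1, hy.2⟩⟩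
          have hUbderiv : ∀ r ∈ Ioo (0:ℝ) s, HasDerivAt Ub (V r (U r)) r := by
            intro r hr
            have h1 := hUderiv r hr
            refine h1.congr_of_eventuallyEq ?_
            exact eventuallyEq_of_mem (Iio_mem_nhds hr.2) fun y hy => if_pos hy
          have hdiff : DifferentiableOn ℝ Ub (Ioo 0 s) := fun r hr =>
            (hUbderiv r hr).differentiableAt.differentiableWithinAt
          have hlim : ContinuousWithinAt Ub (Ioo 0 s) s := by
            unfold ContinuousWithinAt
            rw [hUbT]
            refine Tendsto.congr' ?_ (hULtendsto.mono_left (nhdsWithin_mono _ Ioo_subset_Ico_self))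
            exact eventually_mem_nhdsWithin.mono fun y hy => (hUbeq y hy.2).symm
          have hderivlim : Tendsto (fun x => deriv Ub x) (𝓝[<] s) (𝓝 (V s Lv)) := by
            have he : ∀ᶠ r in 𝓝[<] s, V r (U r) = deriv Ub r :=
              eventually_of_mem hIooTS fun r hr => ((hUbderiv r hr).deriv).symm
            refine Tendsto.congr' he ?_
            -- show Tendsto (fun r => V r (U r)) (𝓝[<] s) (𝓝 (V s Lv))
            obtain ⟨r₀, hr₀, Lp, hLp⟩ := hlip Lv
            have hIcomem : Ico (0:ℝ) s ∈ 𝓝[<] s := by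
              rw [mem_nhdsWithin]
              exact ⟨Ioi 0, isOpen_Ioi, h0T, fun y hy => ⟨hy.1.le, hy.2⟩⟩
            have hU' : Tendsto U (𝓝[<] s) (𝓝 Lv) :=
              hULtendsto.mono_left (nhdsWithin_le_of_mem hIcomem)
            have hd2 : Tendsto (fun r => dist (V r Lv) (V s Lv)) (𝓝[<] s) (𝓝 0) := by
              have := (((hcont Lv).tendsto s).mono_left (nhdsWithin_le_nhds (s := Iio s))).dist
                (tendsto_const_nhds (x := V s Lv) (f := 𝓝[<] s))
              simpa using this
            have hballev : ∀ᶠ r in 𝓝[<] s, U r ∈ closedBall Lv r₀ := by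
              have := hU' (closedBall_mem_nhds Lv hr₀)
              exact this
            have hd1 : Tendsto (fun r => dist (V r (U r)) (V r Lv)) (𝓝[<] s) (𝓝 0) := by
              apply squeeze_zero' (Eventually.of_forall fun r => dist_nonneg)
                (hballev.mono fun r hr =>
                  (hLp r).dist_le_mul _ hr _ (mem_closedBall_self hr₀.le))
              have := (hU'.dist (tendsto_const_nhds (x := Lv))).const_mul (Lp : ℝ)
              simpa using this
            rw [tendsto_iff_dist_tendsto_zero]
            apply squeeze_zero' (Eventually.of_forall fun r => dist_nonneg)
              (Eventually.of_forall fun r => dist_triangle (V r (U r)) (V r Lv) (V s Lv))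
            simpa using hd1.add hd2
          have hend : HasDerivWithinAt Ub (V s Lv) (Iic s) s :=
            hasDerivWithinAt_Iic_of_tendsto_deriv hdiff hlim hIooTS hderivlim
          rw [show Ub s = Lv from hUbT]
          exact hend.mono Icc_subset_Iic_self
  -- conclude: T = 1, otherwise extend by Picard-Lindelof
  rcases eq_or_lt_of_le hTmem.2 with hT1 | hT1
  · obtain ⟨-, u, hu⟩ := hTS
    exact ⟨u, hu.1, by rw [← hT1]; exact hu.2⟩
  · exfalso
    obtain ⟨-, ub, hub⟩ := hTS
    obtain ⟨r, hr, Lp, hLp⟩ := hlip (ub T)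
    set Cb := K * (1 + ‖ub T‖ + r) with hCbdef
    clear_value Cb
    have hCb0 : 0 ≤ Cb := by rw [hCbdef]; positivity
    have hCbbound : ∀ s : ℝ, ∀ x ∈ closedBall (ub T) r, ‖V s x‖ ≤ Cb := by
      intro s x hx
      refine le_trans (hgrow s x) ?_
      rw [hCbdef]
      have h1 : ‖x‖ ≤ ‖ub T‖ + r := norm_le_norm_add_const_of_dist_le (mem_closedBall.mp hx)
      nlinarith
    set ε := min (1 - T) (r / (Cb + 1)) with hεdef
    have hε : 0 < ε := lt_min (by linarith) (div_pos hr (by positivity))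
    clear_value ε
    have hε1 : T + ε ≤ 1 := by
      have := min_le_left (1 - T) (r / (Cb + 1)); rw [← hεdef] at this; linarith
    have hPL : IsPicardLindelof V (tmin := T) (tmax := T + ε) ⟨T, le_rfl, by linarith⟩ (ub T)
        ⟨r, hr.le⟩ 0 ⟨Cb, hCb0⟩ Lp :=
      { lipschitzOnWith := fun t _ => hLp t
        continuousOn := fun x _ => (hcont x).continuousOn
        norm_le := fun t _ x hx => hCbbound t x hx
        mul_max_le := by
          simp only [NNReal.coe_zero, sub_zero, NNReal.coe_mk]
          show Cb * max (T + ε - T) (T - T) ≤ r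
          rw [show T + ε - T = ε by ring, sub_self, max_eq_left hε.le]
          have h1 : ε ≤ r / (Cb + 1) := by rw [hεdef]; exact min_le_right _ _
          have h2 : Cb * ε ≤ Cb * (r / (Cb + 1)) := mul_le_mul_of_nonneg_left h1 hCb0
          have h3 : Cb * (r / (Cb + 1)) ≤ r := by
            rw [mul_div_assoc']
            rw [div_le_iff₀ (by positivity)]
            nlinarith
          linarith }
    obtain ⟨w, hw0, hwd⟩ := hPL.exists_eq_forall_mem_Icc_hasDerivWithinAt₀
    replace hw0 : w T = ub T := hw0
    set g : ℝ → X := fun s => if s ≤ T then ub s else w s with hgdef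
    have hgTS : T + ε ∈ S := by
      refine ⟨⟨by linarith [hTmem.1], hε1⟩, g, ?_, ?_⟩
      · rw [show g 0 = ub 0 from if_pos hTmem.1]; exact hub.1
      · intro s hs
        rcases lt_trichotomy s T with hsT | hsT | hsT
        · have hbase := hub.2 s ⟨hs.1, hsT.le⟩
          have h2 := hasDerivWithinAt_Icc_enlarge (by linarith : T ≤ T + ε)
            ⟨hs.1, hsT.le⟩ hsT hbase
          have hev : g =ᶠ[𝓝[Icc 0 (T + ε)] s] ub :=
            eventuallyEq_of_mem (mem_nhdsWithin_of_mem_nhds (Iio_mem_nhds hsT))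
              fun y hy => if_pos (le_of_lt hy)
          rw [show g s = ub s from if_pos hsT.le]
          exact h2.congr_of_eventuallyEq hev (if_pos hsT.le)
        · subst hsT
          have hgs : g s = ub s := if_pos le_rfl
          have hunion : Icc (0:ℝ) (s + ε) = Icc 0 s ∪ Icc s (s + ε) :=
            (Icc_union_Icc_eq_Icc hTmem.1 (by linarith)).symm
          have hgw : ∀ y ∈ Icc s (s + ε), g y = w y := by
            intro y hy
            rcases eq_or_lt_of_le hy.1 with h | h
            · rw [← h, hgs, hw0]
            · exact if_neg (not_le.mpr h)
          have hleft : HasDerivWithinAt g (V s (g s)) (Icc 0 s) s := by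
            have h1 := hub.2 s ⟨hTmem.1, le_rfl⟩
            rw [hgs]
            exact h1.congr (fun y hy => if_pos hy.2) hgs
          have hright : HasDerivWithinAt g (V s (g s)) (Icc s (s + ε)) s := by
            have h1 := hwd s ⟨le_rfl, by linarith⟩
            rw [hgs, show ub s = w s from hw0.symm]
            exact h1.congr hgw (hgw s ⟨le_rfl, by linarith⟩)
          rw [hunion]
          exact hleft.union hright
        · have hbase := hwd s ⟨hsT.le, hs.2⟩
          have hmem : Icc T (T + ε) ∈ 𝓝[Icc 0 (T + ε)] s := by
            rw [mem_nhdsWithin]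
            exact ⟨Ioi T, isOpen_Ioi, hsT, fun y hy => ⟨le_of_lt hy.1, hy.2.2⟩⟩
          have h2 := hbase.mono_of_mem_nhdsWithin hmem
          have hev : g =ᶠ[𝓝[Icc 0 (T + ε)] s] w :=
            eventuallyEq_of_mem (mem_nhdsWithin_of_mem_nhds (Ioi_mem_nhds hsT))
              fun y hy => if_neg (not_le.mpr hy)
          rw [show g s = w s from if_neg (not_le.mpr hsT)]
          exact h2.congr_of_eventuallyEq hev (if_neg (not_le.mpr hsT))
    have := le_csSup hbdd hgTS
    rw [← hTdef] at this
    linarith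

end ODE

section Gram
variable {X : Type*} [NormedAddCommGroup X] [InnerProductSpace ℝ X] [CompleteSpace X]
  {n : ℕ} {F : X → EuclideanSpace ℝ (Fin n)}

lemma gram_mul_inverse_apply (u : X) (hu : IsUnit (gram F u))
    (w : EuclideanSpace ℝ (Fin n)) :
    gram F u (Ring.inverse (gram F u) w) = w := by
  have h1 : gram F u * Ring.inverse (gram F u) = 1 := Ring.mul_inverse_cancel _ hu
  calc gram F u (Ring.inverse (gram F u) w) = (gram F u * Ring.inverse (gram F u)) w := rfl
  _ = w := by rw [h1]; rfl

theorem gram_isUnit (u : X) (hsurj : Function.Surjective (fderiv ℝ F u)) :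
    IsUnit (gram F u) := by
  set A := fderiv ℝ F u with hA
  have hinj : Function.Injective (gram F u) := by
    intro w w' hww'
    have h : gram F u (w - w') = 0 := by simp [map_sub, hww']
    have h2 : ContinuousLinearMap.adjoint A (w - w') = 0 := by
      have : ⟪ContinuousLinearMap.adjoint A (w - w'), ContinuousLinearMap.adjoint A (w - w')⟫ = 0 := by
        rw [ContinuousLinearMap.adjoint_inner_left]
        change ⟪w - w', (gram F u) (w - w')⟫ = 0
        rw [h, inner_zero_right]
      exact inner_self_eq_zero.mp this
    have h3 : w - w' = 0 := by
      obtain ⟨x, hx⟩ := hsurj (w - w')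
      have h4 : ⟪w - w', A x⟫ = 0 := by
        rw [← ContinuousLinearMap.adjoint_inner_left, h2, inner_zero_left]
      rw [hx] at h4
      exact inner_self_eq_zero.mp h4
    exact sub_eq_zero.mp h3
  have hbij : Function.Bijective (gram F u) :=
    ⟨hinj, LinearMap.surjective_of_injective (f := ((gram F u) : EuclideanSpace ℝ (Fin n) →ₗ[ℝ] EuclideanSpace ℝ (Fin n))) hinj⟩
  exact ContinuousLinearMap.isUnit_iff_bijective.mpr hbij

noncomputable def adjL : (X →L[ℝ] EuclideanSpace ℝ (Fin n)) →L[ℝ]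
    (EuclideanSpace ℝ (Fin n) →L[ℝ] X) :=
  LinearMap.mkContinuous
    { toFun := ContinuousLinearMap.adjoint
      map_add' := fun A B => by simp [map_add]
      map_smul' := fun c A => by
        simp [LinearIsometryEquiv.map_smulₛₗ] }
    1 (fun A => by simp)

@[simp] lemma adjL_apply (A : X →L[ℝ] EuclideanSpace ℝ (Fin n)) :
    adjL A = ContinuousLinearMap.adjoint A := rfl

theorem hD (hF : ContDiff ℝ 2 F) : ContDiff ℝ 1 (fderiv ℝ F) :=
  hF.fderiv_right (by norm_num)

theorem hAdCD (hF : ContDiff ℝ 2 F) :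
    ContDiff ℝ 1 (fun v => ContinuousLinearMap.adjoint (fderiv ℝ F v)) :=
  (adjL (X := X) (n := n)).contDiff.comp (hD hF)

theorem hgramCD (hF : ContDiff ℝ 2 F) : ContDiff ℝ 1 (gram F) :=
  (hD hF).clm_comp (hAdCD hF)

theorem hQCD (hF : ContDiff ℝ 2 F) (u : X) (hu : IsUnit (gram F u)) :
    ContDiffAt ℝ 1 (fun v => Ring.inverse (gram F v)) u := by
  have h1 : ContDiffAt ℝ 1 Ring.inverse (gram F u) := by
    have := contDiffAt_ringInverse ℝ (n := 1) hu.unit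
    rwa [hu.unit_spec] at this
  exact h1.comp u (hgramCD hF).contDiffAt

theorem hBCD (hF : ContDiff ℝ 2 F) (u : X) (hu : IsUnit (gram F u)) :
    ContDiffAt ℝ 1 (fun v => (ContinuousLinearMap.adjoint (fderiv ℝ F v)).comp
      (Ring.inverse (gram F v))) u :=
  ContDiffAt.clm_comp ((hAdCD hF).contDiffAt) (hQCD hF u hu)

theorem B_norm_bound (u : X) (hu : IsUnit (gram F u)) {c : ℝ}
    (hb : ‖Ring.inverse (gram F u)‖ ≤ c) (w : EuclideanSpace ℝ (Fin n)) :
    ‖(ContinuousLinearMap.adjoint (fderiv ℝ F u)) (Ring.inverse (gram F u) w)‖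
      ≤ Real.sqrt c * ‖w‖ := by
  set A := fderiv ℝ F u
  set Q := Ring.inverse (gram F u) with hQdef
  have hc : 0 ≤ c := le_trans (norm_nonneg _) hb
  have hkey : gram F u (Q w) = w := by
    have h1 : gram F u * Q = 1 := Ring.mul_inverse_cancel _ hu
    calc gram F u (Q w) = (gram F u * Q) w := rfl
    _ = w := by rw [h1]; rfl
  have hsq : ‖(ContinuousLinearMap.adjoint A) (Q w)‖ ^ 2 ≤ (c * ‖w‖) * ‖w‖ := by
    calc ‖(ContinuousLinearMap.adjoint A) (Q w)‖ ^ 2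
        = ⟪(ContinuousLinearMap.adjoint A) (Q w), (ContinuousLinearMap.adjoint A) (Q w)⟫ :=
          (real_inner_self_eq_norm_sq _).symm
      _ = ⟪Q w, A ((ContinuousLinearMap.adjoint A) (Q w))⟫ := by
          rw [ContinuousLinearMap.adjoint_inner_left]
      _ = ⟪Q w, w⟫ := by
          have : A ((ContinuousLinearMap.adjoint A) (Q w)) = gram F u (Q w) := rfl
          rw [this, hkey]
      _ ≤ ‖Q w‖ * ‖w‖ := real_inner_le_norm _ _
      _ ≤ (c * ‖w‖) * ‖w‖ := by
          have h2 : ‖Q w‖ ≤ c * ‖w‖ :=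
            le_trans (Q.le_opNorm w) (by
              exact mul_le_mul_of_nonneg_right hb (norm_nonneg _))
          exact mul_le_mul_of_nonneg_right h2 (norm_nonneg _)
  calc ‖(ContinuousLinearMap.adjoint A) (Q w)‖
      = Real.sqrt (‖(ContinuousLinearMap.adjoint A) (Q w)‖ ^ 2) := by
        rw [Real.sqrt_sq (norm_nonneg _)]
    _ ≤ Real.sqrt ((c * ‖w‖) * ‖w‖) := Real.sqrt_le_sqrt hsq
    _ = Real.sqrt c * ‖w‖ := by
        rw [mul_assoc, Real.sqrt_mul hc, Real.sqrt_mul_self (norm_nonneg w)]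

end Gram
set_option maxHeartbeats 1600000 in
/-- If `F : X → ℝⁿ` is `C²` with everywhere surjective differential and
`‖G(u)⁻¹‖ ≤ C (1 + ‖u‖)²`, then for every starting point `u⁰` and every `C¹`
curve `γ` on `[0,1]` with `γ(0) = F(u⁰)`, the path-lifting equation
`u'(s) = dF|_{u(s)}* (G(u(s)))⁻¹ γ'(s)`, `u(0) = u⁰` has a global solution on
`[0,1]`; in particular `F` is surjective. -/
theorem global_path_lifting
    {X : Type*} [NormedAddCommGroup X] [InnerProductSpace ℝ X] [CompleteSpace X]
    {n : ℕ} (hn : 1 ≤ n) (F : X → EuclideanSpace ℝ (Fin n)) (hF : ContDiff ℝ 2 F)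
    (hsurj : ∀ u : X, Function.Surjective (fderiv ℝ F u))
    (C : ℝ) (hC : 0 < C)
    (hbound : ∀ u : X, ‖Ring.inverse (gram F u)‖ ≤ C * (1 + ‖u‖) ^ 2) :
    (∀ (u0 : X) (γ γ' : ℝ → EuclideanSpace ℝ (Fin n)),
      (∀ s ∈ Icc (0:ℝ) 1, HasDerivWithinAt γ (γ' s) (Icc 0 1) s) →
      ContinuousOn γ' (Icc 0 1) → γ 0 = F u0 →
      ∃ u : ℝ → X, u 0 = u0 ∧ ∀ s ∈ Icc (0:ℝ) 1,
        HasDerivWithinAt u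
          ((ContinuousLinearMap.adjoint (fderiv ℝ F (u s)))
            (Ring.inverse (gram F (u s)) (γ' s))) (Icc 0 1) s) ∧
    Function.Surjective F := by
  have hunit : ∀ u : X, IsUnit (gram F u) := fun u => gram_isUnit u (hsurj u)
  -- norm bound for the lifted vector field
  have hBx : ∀ (x : X) (w : EuclideanSpace ℝ (Fin n)),
      ‖(ContinuousLinearMap.adjoint (fderiv ℝ F x)) (Ring.inverse (gram F x) w)‖
        ≤ Real.sqrt C * (1 + ‖x‖) * ‖w‖ := by
    intro x w
    have h1 := B_norm_bound x (hunit x) (hbound x) w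
    have h2 : Real.sqrt (C * (1 + ‖x‖) ^ 2) = Real.sqrt C * (1 + ‖x‖) := by
      rw [Real.sqrt_mul hC.le, Real.sqrt_sq (by positivity)]
    rwa [h2] at h1
  have main : ∀ (u0 : X) (γ γ' : ℝ → EuclideanSpace ℝ (Fin n)),
      (∀ s ∈ Icc (0:ℝ) 1, HasDerivWithinAt γ (γ' s) (Icc 0 1) s) →
      ContinuousOn γ' (Icc 0 1) → γ 0 = F u0 →
      ∃ u : ℝ → X, u 0 = u0 ∧ ∀ s ∈ Icc (0:ℝ) 1,
        HasDerivWithinAt u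
          ((ContinuousLinearMap.adjoint (fderiv ℝ F (u s)))
            (Ring.inverse (gram F (u s)) (γ' s))) (Icc 0 1) s := by
    intro u0 γ γ' hγd hγ'c hγ0
    clear hγd hγ0 γ
    obtain ⟨M0, hM0⟩ := isCompact_Icc.exists_bound_of_continuousOn hγ'c
    set M := max M0 0 with hMdef
    have hM : 0 ≤ M := le_max_right _ _
    have hM' : ∀ s ∈ Icc (0:ℝ) 1, ‖γ' s‖ ≤ M := fun s hs =>
      le_trans (hM0 s hs) (le_max_left _ _)
    set γc : ℝ → EuclideanSpace ℝ (Fin n) :=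
      fun s => γ' ((projIcc (0:ℝ) 1 zero_le_one s : Icc (0:ℝ) 1) : ℝ) with hγcdef
    have hγceq : ∀ s ∈ Icc (0:ℝ) 1, γc s = γ' s := by
      intro s hs
      rw [hγcdef]
      simp only [projIcc_of_mem zero_le_one hs]
    have hγccont : Continuous γc := by
      have h1 : Continuous (fun p : Icc (0:ℝ) 1 => γ' (p : ℝ)) :=
        continuousOn_iff_continuous_restrict.mp hγ'c
      exact h1.comp continuous_projIcc
    have hγcbound : ∀ s, ‖γc s‖ ≤ M := fun s =>
      hM' _ (projIcc (0:ℝ) 1 zero_le_one s).2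
    set B : X → (EuclideanSpace ℝ (Fin n) →L[ℝ] X) := fun x =>
      (ContinuousLinearMap.adjoint (fderiv ℝ F x)).comp (Ring.inverse (gram F x)) with hBdef
    set V : ℝ → X → X := fun s x => B x (γc s) with hVdef
    set K := Real.sqrt C * M with hKdef
    have hK : 0 ≤ K := by rw [hKdef]; positivity
    have hgrow : ∀ (s : ℝ) (x : X), ‖V s x‖ ≤ K * (1 + ‖x‖) := by
      intro s x
      have h1 : ‖V s x‖ ≤ Real.sqrt C * (1 + ‖x‖) * ‖γc s‖ := hBx x (γc s)
      have h2 := hγcbound s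
      have h3 : (0:ℝ) ≤ Real.sqrt C * (1 + ‖x‖) := by positivity
      rw [hKdef]
      nlinarith [norm_nonneg (γc s), norm_nonneg x, Real.sqrt_nonneg C]
    have hlipV : ∀ x₀ : X, ∃ r > (0:ℝ), ∃ L : ℝ≥0, ∀ s : ℝ,
        LipschitzOnWith L (V s) (closedBall x₀ r) := by
      intro x₀
      obtain ⟨LB, t, htmem, hlipB⟩ := (hBCD hF x₀ (hunit x₀)).exists_lipschitzOnWith
      obtain ⟨r1, hr1, hball⟩ := Metric.mem_nhds_iff.mp htmem
      have hsub : closedBall x₀ (r1 / 2) ⊆ t :=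
        fun y hy => hball (lt_of_le_of_lt (mem_closedBall.mp hy) (by linarith))
      refine ⟨r1 / 2, by positivity, LB * ⟨M, hM⟩, fun s => ?_⟩
      apply LipschitzOnWith.of_dist_le_mul
      intro x hx y hy
      have hxy : dist (B x) (B y) ≤ (LB : ℝ) * dist x y :=
        (hlipB.mono hsub).dist_le_mul x hx y hy
      have h1 : dist (V s x) (V s y) ≤ ‖B x - B y‖ * ‖γc s‖ := by
        rw [dist_eq_norm]
        have : V s x - V s y = (B x - B y) (γc s) := by
          simp [hVdef, ContinuousLinearMap.sub_apply]
        rw [this]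
        exact (B x - B y).le_opNorm (γc s)
      have h2 : ‖B x - B y‖ = dist (B x) (B y) := (dist_eq_norm _ _).symm
      have h3 : ‖γc s‖ ≤ M := hγcbound s
      calc dist (V s x) (V s y) ≤ ‖B x - B y‖ * ‖γc s‖ := h1
        _ ≤ ((LB : ℝ) * dist x y) * M := by
            rw [h2]
            exact mul_le_mul hxy h3 (norm_nonneg _)
              (mul_nonneg LB.coe_nonneg dist_nonneg)
        _ = ((LB * ⟨M, hM⟩ : ℝ≥0) : ℝ) * dist x y := by
            push_cast
            show (LB : ℝ) * dist x y * M = ((LB : ℝ) * M) * dist x y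
            ring
    have hcontV : ∀ x : X, Continuous fun s => V s x := fun x =>
      (B x).continuous.comp hγccont
    obtain ⟨u, hu0, hud⟩ := global_sol V K hK hgrow hlipV hcontV u0
    refine ⟨u, hu0, fun s hs => ?_⟩
    have h1 := hud s hs
    have h2 : V s (u s) = (ContinuousLinearMap.adjoint (fderiv ℝ F (u s)))
        (Ring.inverse (gram F (u s)) (γ' s)) := by
      rw [hVdef]
      simp only [hBdef, ContinuousLinearMap.comp_apply]
      rw [hγceq s hs]
    rwa [h2] at h1
  refine ⟨main, ?_⟩
  intro y
  set γ : ℝ → EuclideanSpace ℝ (Fin n) := fun s => F 0 + s • (y - F 0) with hγdef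
  set γ'c : ℝ → EuclideanSpace ℝ (Fin n) := fun _ => y - F 0 with hγ'cdef
  have hγd : ∀ s ∈ Icc (0:ℝ) 1, HasDerivWithinAt γ (γ'c s) (Icc 0 1) s := by
    intro s _
    have h1 : HasDerivAt (fun τ : ℝ => F 0 + τ • (y - F 0)) ((1:ℝ) • (y - F 0)) s :=
      ((hasDerivAt_id s).smul_const (y - F 0)).const_add (F 0)
    rw [one_smul] at h1
    exact h1.hasDerivWithinAt
  obtain ⟨u, hu0, hud⟩ := main 0 γ γ'c hγd continuousOn_const (by simp [hγdef])
  have hFu : ∀ s ∈ Icc (0:ℝ) 1,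
      HasDerivWithinAt (fun τ => F (u τ) - γ τ) 0 (Icc 0 1) s := by
    intro s hs
    have h1 : HasFDerivAt F (fderiv ℝ F (u s)) (u s) :=
      ((hF.differentiable (by norm_num)) (u s)).hasFDerivAt
    have h2 := h1.comp_hasDerivWithinAt s (hud s hs)
    have h3 : fderiv ℝ F (u s) ((ContinuousLinearMap.adjoint (fderiv ℝ F (u s)))
        (Ring.inverse (gram F (u s)) (γ'c s))) = γ'c s := by
      have : fderiv ℝ F (u s) ((ContinuousLinearMap.adjoint (fderiv ℝ F (u s)))
          (Ring.inverse (gram F (u s)) (γ'c s)))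
          = gram F (u s) (Ring.inverse (gram F (u s)) (γ'c s)) := rfl
      rw [this, gram_mul_inverse_apply (u s) (gram_isUnit (u s) (hsurj (u s)))]
    rw [h3] at h2
    have h4 := h2.sub (hγd s hs)
    rw [sub_self] at h4
    exact h4
  have hcont : ContinuousOn (fun τ => F (u τ) - γ τ) (Icc 0 1) :=
    fun s hs => (hFu s hs).continuousWithinAt
  have hconst := constant_of_has_deriv_right_zero hcont
    (fun x hx => hasDerivWithinAt_Ici_of_Icc hx (hFu x (Ico_subset_Icc_self hx)))
  have h5 := hconst 1 (right_mem_Icc.mpr zero_le_one)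
  refine ⟨u 1, ?_⟩
  have h6 : F (u 0) - γ 0 = 0 := by
    rw [hu0, hγdef]
    simp
  rw [h6] at h5
  have h7 : γ 1 = y := by rw [hγdef]; simp
  have h8 : F (u 1) = γ 1 := by
    have := sub_eq_zero.mp h5
    exact this
  rw [h8, h7]
end

section
/- Let u : I → X be a solution of the PLE on an interval I ⊆ [0,1) with λ₁(s) > 0 on I, and assume λ_i(s) ≥ λ₀ > 0 for all i = 2,…,n and s ∈ I. Then, with C̄ := (n−1)·(sup_{s∈[0,1]}‖γ'(s)‖)/√λ₀, one has ‖u'(s)‖ ≤ |a₁(s)|/√λ₁(s) + C̄ for every s ∈ I. -/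
open Set
open scoped RealInnerProductSpace

lemma sqrt_add_le_aux {a b : ℝ} (ha : 0 ≤ a) (hb : 0 ≤ b) :
    Real.sqrt (a + b) ≤ Real.sqrt a + Real.sqrt b := by
  rw [show Real.sqrt a + Real.sqrt b
      = Real.sqrt ((Real.sqrt a + Real.sqrt b)^2) from
      (Real.sqrt_sq (by positivity)).symm]
  apply Real.sqrt_le_sqrt
  nlinarith [Real.sq_sqrt ha, Real.sq_sqrt hb, Real.sqrt_nonneg a, Real.sqrt_nonneg b]

lemma sqrt_sum_le_aux {ι : Type*} (s : Finset ι) (f : ι → ℝ) (hf : ∀ i ∈ s, 0 ≤ f i) :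
    Real.sqrt (∑ i ∈ s, f i) ≤ ∑ i ∈ s, Real.sqrt (f i) := by
  classical
  induction s using Finset.induction_on with
  | empty => simp
  | insert _ _ hx ih =>
    rename_i a s
    rw [Finset.sum_insert hx, Finset.sum_insert hx]
    calc Real.sqrt (f a + ∑ i ∈ s, f i)
        ≤ Real.sqrt (f a) + Real.sqrt (∑ i ∈ s, f i) :=
          sqrt_add_le_aux (hf a (Finset.mem_insert_self a s))
            (Finset.sum_nonneg fun i hi => hf i (Finset.mem_insert_of_mem hi))
      _ ≤ _ := by
          gcongr
          exact ih fun i hi => hf i (Finset.mem_insert_of_mem hi)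

/-- **Lemma (basic estimate along the PLE).** If `u` solves the path-lifting
equation on an interval `I ⊆ [0,1)` with `λ₁(s) > 0` and `λ_i(s) ≥ λ₀ > 0` for
`i ≥ 2`, then `‖u'(s)‖ ≤ |a₁(s)|/√λ₁(s) + C̄` on `I`, where
`C̄ = (n-1)·(sup_{[0,1]} ‖γ'‖)/√λ₀` and `a₁(s) = ⟪γ'(s), z₁(s)⟫`. -/
theorem PLE_velocity_estimate
    {X : Type*} [NormedAddCommGroup X] [InnerProductSpace ℝ X] [CompleteSpace X]
    {n : ℕ} [NeZero n] (F : X → EuclideanSpace ℝ (Fin n)) (hF : ContDiff ℝ 2 F)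
    (I : Set ℝ) (hIsub : I ⊆ Ico 0 1) (hIord : I.OrdConnected)
    -- a C¹ curve γ on [0,1]
    (γ γ' : ℝ → EuclideanSpace ℝ (Fin n))
    (hγ : ∀ s ∈ Icc (0:ℝ) 1, HasDerivWithinAt γ (γ' s) (Icc 0 1) s)
    (hγ'c : ContinuousOn γ' (Icc 0 1))
    -- a solution u of the PLE on I, with derivative u'
    (u : ℝ → X) (u' : ℝ → X)
    (husol : ∀ s ∈ I, HasDerivWithinAt u (u' s) I s)
    (hPLE : ∀ s ∈ I, u' s = (ContinuousLinearMap.adjoint (fderiv ℝ F (u s)))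
        (Ring.inverse (gram F (u s)) (γ' s)))
    -- continuous orthonormal eigenvector family with ordered eigenvalues
    (lam : ℝ → Fin n → ℝ) (z : ℝ → Fin n → EuclideanSpace ℝ (Fin n))
    (horth : ∀ s ∈ I, Orthonormal ℝ (z s))
    (heig : ∀ s ∈ I, ∀ i : Fin n, gram F (u s) (z s i) = lam s i • z s i)
    (hmono : ∀ s ∈ I, Monotone (lam s))
    (hpos : ∀ s ∈ I, 0 < lam s 0)
    (lam0 : ℝ) (hlam0 : 0 < lam0)
    (hA : ∀ s ∈ I, ∀ i : Fin n, i ≠ 0 → lam0 ≤ lam s i) :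
    ∀ s ∈ I, ‖u' s‖ ≤ |⟪γ' s, z s 0⟫| / Real.sqrt (lam s 0) +
      ((n : ℝ) - 1) * (⨆ t : Icc (0:ℝ) 1, ‖γ' (t : ℝ)‖) / Real.sqrt lam0 := by
  classical
  intro s hs
  set T := fderiv ℝ F (u s) with hT
  set G := gram F (u s) with hG
  have hlampos : ∀ i, 0 < lam s i := by
    intro i
    rcases eq_or_ne i 0 with h | h
    · rw [h]; exact hpos s hs
    · exact lt_of_lt_of_le hlam0 (hA s hs i h)
  -- orthonormal basis from the eigenvectors
  have hcard : Fintype.card (Fin n) = Module.finrank ℝ (EuclideanSpace ℝ (Fin n)) := by simp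
  have hsp : ⊤ ≤ Submodule.span ℝ (Set.range (z s)) := by
    have := (basisOfOrthonormalOfCardEqFinrank (horth s hs) hcard).span_eq
    rw [coe_basisOfOrthonormalOfCardEqFinrank] at this
    exact this.ge
  set b : OrthonormalBasis (Fin n) ℝ (EuclideanSpace ℝ (Fin n)) :=
    OrthonormalBasis.mk (horth s hs) hsp with hb
  have hbz : ⇑b = z s := OrthonormalBasis.coe_mk (horth s hs) hsp
  -- G is symmetric
  have hGsym : ∀ x y, ⟪G x, y⟫ = ⟪x, G y⟫ := by
    intro x y
    simp only [hG, gram, ContinuousLinearMap.comp_apply]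
    rw [← ContinuousLinearMap.adjoint_inner_left T,
        ContinuousLinearMap.adjoint_inner_right T]
  have hGb : ∀ (x : EuclideanSpace ℝ (Fin n)) (j : Fin n),
      ⟪G x, b j⟫ = lam s j * ⟪x, b j⟫ := by
    intro x j
    rw [hGsym, hbz, heig s hs j, real_inner_smul_right]
  -- G is a unit
  have hinj : Function.Injective G := by
    intro x y hxy
    have h0 : G (x - y) = 0 := by rw [map_sub, hxy, sub_self]
    have hc : ∀ j, ⟪x - y, b j⟫ = 0 := by
      intro j
      have h1 := hGb (x - y) j
      rw [h0, inner_zero_left] at h1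
      exact (mul_eq_zero.mp h1.symm).resolve_left (ne_of_gt (hlampos j))
    have hxy0 : x - y = 0 := by
      have hrepr := b.sum_repr (x - y)
      rw [← hrepr]
      apply Finset.sum_eq_zero
      intro j _
      rw [b.repr_apply_apply, real_inner_comm, hc j, zero_smul]
    exact sub_eq_zero.mp hxy0
  have hsurj : Function.Surjective G :=
    (LinearMap.injective_iff_surjective (f := (G : EuclideanSpace ℝ (Fin n) →ₗ[ℝ]
      EuclideanSpace ℝ (Fin n)))).mp hinj
  have hGu : IsUnit G := ContinuousLinearMap.isUnit_iff_bijective.mpr ⟨hinj, hsurj⟩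
  set v := Ring.inverse G (γ' s) with hv
  have hGv : G v = γ' s := by
    have h1 : G * Ring.inverse G = 1 := Ring.mul_inverse_cancel G hGu
    have := congrArg (fun f : EuclideanSpace ℝ (Fin n) →L[ℝ] EuclideanSpace ℝ (Fin n) =>
      f (γ' s)) h1
    simpa [ContinuousLinearMap.mul_apply] using this
  -- coefficients
  set c : Fin n → ℝ := fun i => ⟪v, b i⟫ with hc
  set a : Fin n → ℝ := fun i => ⟪γ' s, b i⟫ with ha
  have hac : ∀ i, a i = lam s i * c i := by
    intro i
    show ⟪γ' s, b i⟫ = lam s i * c i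
    rw [← hGv, hGb]
  -- squared norm computation
  have hnormsq : ‖u' s‖ ^ 2 = ∑ i, lam s i * (c i) ^ 2 := by
    have h1 : ‖u' s‖ ^ 2 = ⟪u' s, u' s⟫ := (real_inner_self_eq_norm_sq _).symm
    rw [h1, hPLE s hs]
    rw [ContinuousLinearMap.adjoint_inner_left T]
    have h2 : T ((ContinuousLinearMap.adjoint T) (Ring.inverse (gram F (u s)) (γ' s)))
        = G v := rfl
    rw [h2, hGv]
    rw [← b.sum_inner_mul_inner v (γ' s)]
    apply Finset.sum_congr rfl
    intro i _
    have h3 : ⟪b i, γ' s⟫ = a i := real_inner_comm _ _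
    rw [h3, hac i]
    show c i * (lam s i * c i) = lam s i * c i ^ 2
    ring
  -- sup bound
  set M : ℝ := ⨆ t : Icc (0:ℝ) 1, ‖γ' (t : ℝ)‖ with hM
  have hbdd : BddAbove (Set.range fun t : Icc (0:ℝ) 1 => ‖γ' (t : ℝ)‖) := by
    have heq : (fun t : Icc (0:ℝ) 1 => ‖γ' (t : ℝ)‖)
        = (fun x => ‖γ' x‖) ∘ (Subtype.val : Icc (0:ℝ) 1 → ℝ) := rfl
    rw [heq, Set.range_comp, Subtype.range_val]
    exact (isCompact_Icc.image_of_continuousOn hγ'c.norm).bddAbove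
  have hsIcc : s ∈ Icc (0:ℝ) 1 := ⟨(hIsub hs).1, le_of_lt (hIsub hs).2⟩
  have hsM : ‖γ' s‖ ≤ M := le_ciSup hbdd (⟨s, hsIcc⟩ : Icc (0:ℝ) 1)
  have haM : ∀ i, |a i| ≤ M := by
    intro i
    have h1 : |a i| ≤ ‖γ' s‖ * ‖b i‖ := abs_real_inner_le_norm _ _
    have h2 : ‖b i‖ = 1 := b.orthonormal.1 i
    rw [h2, mul_one] at h1
    exact h1.trans hsM
  have hMnonneg : 0 ≤ M := le_trans (norm_nonneg _) hsM
  -- main estimate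
  have hkey : ∀ i, Real.sqrt (lam s i * (c i) ^ 2) = |a i| / Real.sqrt (lam s i) := by
    intro i
    have hli := hlampos i
    rw [hac i, abs_mul, abs_of_pos hli]
    rw [Real.sqrt_mul hli.le, Real.sqrt_sq_eq_abs]
    rw [eq_div_iff (by positivity)]
    rw [mul_comm (Real.sqrt (lam s i)) |c i|, mul_assoc,
      Real.mul_self_sqrt hli.le, mul_comm]
  have hnorm : ‖u' s‖ = Real.sqrt (∑ i, lam s i * (c i) ^ 2) := by
    rw [← hnormsq, Real.sqrt_sq (norm_nonneg _)]
  rw [hnorm]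
  calc Real.sqrt (∑ i, lam s i * (c i) ^ 2)
      ≤ ∑ i, Real.sqrt (lam s i * (c i) ^ 2) :=
        sqrt_sum_le_aux _ _ (fun i _ => mul_nonneg (hlampos i).le (sq_nonneg _))
    _ = ∑ i, |a i| / Real.sqrt (lam s i) := by
        exact Finset.sum_congr rfl fun i _ => hkey i
    _ = |a 0| / Real.sqrt (lam s 0)
        + ∑ i ∈ Finset.univ.erase 0, |a i| / Real.sqrt (lam s i) := by
        rw [← Finset.add_sum_erase _ _ (Finset.mem_univ 0)]
    _ ≤ |a 0| / Real.sqrt (lam s 0)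
        + ∑ _i ∈ Finset.univ.erase (0 : Fin n), M / Real.sqrt lam0 := by
        refine add_le_add le_rfl (Finset.sum_le_sum fun i hi => ?_)
        have hi0 : i ≠ 0 := Finset.ne_of_mem_erase hi
        have h1 : Real.sqrt lam0 ≤ Real.sqrt (lam s i) :=
          Real.sqrt_le_sqrt (hA s hs i hi0)
        exact div_le_div₀ hMnonneg (haM i) (Real.sqrt_pos.mpr hlam0) h1
    _ = |a 0| / Real.sqrt (lam s 0) + ((n : ℝ) - 1) * M / Real.sqrt lam0 := by
        rw [Finset.sum_const, Finset.card_erase_of_mem (Finset.mem_univ 0),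
          Finset.card_univ, Fintype.card_fin]
        have hn : 1 ≤ n := Nat.one_le_iff_ne_zero.mpr (NeZero.ne n)
        rw [nsmul_eq_mul, Nat.cast_sub hn, Nat.cast_one, mul_div_assoc]
    _ = |⟪γ' s, z s 0⟫| / Real.sqrt (lam s 0)
        + ((n : ℝ) - 1) * M / Real.sqrt lam0 := by
        rw [ha]
        simp [hbz]
end

section
/- Let K, C̃, C₀ > 0 and α < β be reals. Let g : [α,β] → ℝ be differentiable and ℓ : [α,β] → (0,∞) be such that for every s ∈ [α,β]: |g(s)| > √(2C̃/K), |g'(s)| ≥ (K g(s)² − C̃)/ℓ(s), and |g(s)| ℓ(s) ≤ C₀. Then g has constant sign and is strictly monotone on [α,β], and ∫_α^β |g(s)| ds ≤ 2√2 · C₀ / √(C̃ K). -/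
open Set intervalIntegral

open MeasureTheory in
private lemma integral_le_sub_of_hasDerivWithinAt (α β : ℝ) (hαβ : α < β) (φ φ' g : ℝ → ℝ)
    (hφ : ∀ s ∈ Icc α β, HasDerivWithinAt φ (φ' s) (Icc α β) s)
    (hgc : ContinuousOn g (Icc α β))
    (hd : ∀ s ∈ Icc α β, g s ≤ φ' s) :
    (∫ s in α..β, g s) ≤ φ β - φ α := by
  have huIcc : uIcc α β = Icc α β := uIcc_of_le hαβ.le
  have hint : IntervalIntegrable g volume α β := by
    apply ContinuousOn.intervalIntegrable; rwa [huIcc]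
  set H : ℝ → ℝ := fun s => φ s - ∫ t in α..s, g t with hH
  have hHc : ContinuousOn H (Icc α β) := by
    apply ContinuousOn.sub (fun s hs => (hφ s hs).continuousWithinAt)
    have := intervalIntegral.continuousOn_primitive_interval' hint left_mem_uIcc
    rwa [huIcc] at this
  have hHd : ∀ x ∈ interior (Icc α β), HasDerivAt H (φ' x - g x) x := by
    intro x hx
    rw [interior_Icc] at hx
    have hxI : x ∈ Icc α β := Ioo_subset_Icc_self hx
    have h1 : HasDerivAt φ (φ' x) x := (hφ x hxI).hasDerivAt (Icc_mem_nhds hx.1 hx.2)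
    have hint' : IntervalIntegrable g volume α x := by
      apply ContinuousOn.intervalIntegrable
      rw [uIcc_of_le hx.1.le]
      exact hgc.mono (Icc_subset_Icc le_rfl hx.2.le)
    have hmeas := ContinuousOn.stronglyMeasurableAtFilter (μ := volume) isOpen_Ioo
      (hgc.mono Ioo_subset_Icc_self) x hx
    have hca : ContinuousAt g x := (hgc x hxI).continuousAt (Icc_mem_nhds hx.1 hx.2)
    exact h1.sub (intervalIntegral.integral_hasDerivAt_right hint' hmeas hca)
  have hmono : MonotoneOn H (Icc α β) := by
    apply monotoneOn_of_deriv_nonneg (convex_Icc α β) hHc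
    · intro x hx; exact (hHd x hx).differentiableAt.differentiableWithinAt
    · intro x hx
      rw [(hHd x hx).deriv]
      rw [interior_Icc] at hx
      linarith [hd x (Ioo_subset_Icc_self hx)]
  have hle := hmono (left_mem_Icc.mpr hαβ.le) (right_mem_Icc.mpr hαβ.le) hαβ.le
  simp only [hH, intervalIntegral.integral_same, sub_zero] at hle
  linarith

private lemma aux_pos (K Ct C₀ : ℝ) (hK : 0 < K) (hCt : 0 < Ct) (hC₀ : 0 < C₀)
    (α β : ℝ) (hαβ : α < β) (g g' l : ℝ → ℝ)
    (hg : ∀ s ∈ Icc α β, HasDerivWithinAt g (g' s) (Icc α β) s)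
    (hl : ∀ s ∈ Icc α β, 0 < l s)
    (hpos : ∀ s ∈ Icc α β, Real.sqrt (2 * Ct / K) < g s)
    (h2 : ∀ s ∈ Icc α β, (K * g s ^ 2 - Ct) / l s ≤ |g' s|)
    (h3 : ∀ s ∈ Icc α β, g s * l s ≤ C₀) :
    (∫ s in α..β, g s) ≤ 2 * Real.sqrt 2 * C₀ / Real.sqrt (Ct * K) := by
  have hsqb : 0 < Real.sqrt (2 * Ct / K) := Real.sqrt_pos.mpr (by positivity)
  have hg0 : ∀ s ∈ Icc α β, 0 < g s := fun s hs => hsqb.trans (hpos s hs)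
  have hsq : ∀ s ∈ Icc α β, 2 * Ct / K < g s ^ 2 := by
    intro s hs
    nlinarith [Real.sq_sqrt (show (0:ℝ) ≤ 2 * Ct / K by positivity), hpos s hs, hsqb]
  have key : ∀ s ∈ Icc α β, K * g s ^ 3 / (2 * C₀) ≤ |g' s| := by
    intro s hs
    have hgs := hg0 s hs
    have hls := hl s hs
    have hsqs := hsq s hs
    have h3s := h3 s hs
    refine le_trans ?_ (h2 s hs)
    rw [div_le_div_iff₀ (by positivity) hls]
    have e2 : 2 * Ct ≤ K * g s ^ 2 := by
      rw [div_lt_iff₀ hK] at hsqs; nlinarith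
    nlinarith [mul_le_mul_of_nonneg_left h3s (le_of_lt (mul_pos hK (pow_pos hgs 2))),
      mul_le_mul_of_nonneg_left e2 hC₀.le]
  have hg'ne : ∀ s ∈ Icc α β, g' s ≠ 0 := by
    intro s hs
    have hgs := hg0 s hs
    have : (0:ℝ) < |g' s| := lt_of_lt_of_le (by positivity) (key s hs)
    exact abs_pos.mp this
  have hgc : ContinuousOn g (Icc α β) := fun s hs => (hg s hs).continuousWithinAt
  -- the common bound
  have hbound : ∀ s ∈ Icc α β, (g s)⁻¹ ≤ (Real.sqrt (2 * Ct / K))⁻¹ := by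
    intro s hs
    exact inv_anti₀ hsqb (hpos s hs).le
  have hinvpos : ∀ s ∈ Icc α β, 0 < (g s)⁻¹ := fun s hs => inv_pos.mpr (hg0 s hs)
  have final : 2 * C₀ / K * (Real.sqrt (2 * Ct / K))⁻¹ ≤
      2 * Real.sqrt 2 * C₀ / Real.sqrt (Ct * K) := by
    have ha : (0:ℝ) < Real.sqrt K := Real.sqrt_pos.mpr hK
    have hb : (0:ℝ) < Real.sqrt Ct := Real.sqrt_pos.mpr hCt
    have h2' : (0:ℝ) < Real.sqrt 2 := Real.sqrt_pos.mpr (by norm_num)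
    have ea : Real.sqrt K ^ 2 = K := Real.sq_sqrt hK.le
    have eb : Real.sqrt Ct ^ 2 = Ct := Real.sq_sqrt hCt.le
    have e2 : Real.sqrt 2 ^ 2 = 2 := Real.sq_sqrt (by norm_num)
    have e3 : Real.sqrt (2 * Ct / K) = Real.sqrt 2 * Real.sqrt Ct / Real.sqrt K := by
      rw [show 2 * Ct / K = (Real.sqrt 2 * Real.sqrt Ct / Real.sqrt K) ^ 2 by
        field_simp; rw [ea, eb, e2]; ring]
      exact Real.sqrt_sq (by positivity)
    have e4 : Real.sqrt (Ct * K) = Real.sqrt Ct * Real.sqrt K := Real.sqrt_mul hCt.le K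
    set a := Real.sqrt K with hadef
    set b := Real.sqrt Ct with hbdef
    set c := Real.sqrt 2 with hcdef
    rw [e3, e4, ← ea]
    rw [show 2 * C₀ / a ^ 2 * (c * b / a)⁻¹ = 2 * C₀ / (a * c * b) by
      field_simp]
    rw [div_le_div_iff₀ (by positivity) (by positivity)]
    nlinarith [e2, mul_pos (mul_pos ha hb) hC₀]
  rcases hasDerivWithinAt_forall_lt_or_forall_gt_of_forall_ne (convex_Icc α β) hg
      (m := 0) hg'ne with hneg | hposd
  · -- g' < 0 on Icc
    have hmain := integral_le_sub_of_hasDerivWithinAt α β hαβ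
      (fun s => 2 * C₀ / K * (g s)⁻¹) (fun s => 2 * C₀ / K * (-g' s / g s ^ 2)) g
      (fun s hs => ((hg s hs).inv (ne_of_gt (hg0 s hs))).const_mul _)
      hgc
      (by
        intro s hs
        show g s ≤ 2 * C₀ / K * (-g' s / g s ^ 2)
        have hgs := hg0 s hs
        have hk := key s hs
        rw [abs_of_neg (hneg s hs)] at hk
        rw [div_le_iff₀ (by positivity)] at hk
        rw [show 2 * C₀ / K * (-g' s / g s ^ 2) = 2 * C₀ * (-g' s) / (K * g s ^ 2) by ring,
          le_div_iff₀ (by positivity)]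
        nlinarith)
    refine hmain.trans (le_trans ?_ final)
    have h1 := hbound β (right_mem_Icc.mpr hαβ.le)
    have h2 := hinvpos α (left_mem_Icc.mpr hαβ.le)
    have hc : (0:ℝ) < 2 * C₀ / K := by positivity
    nlinarith
  · -- g' > 0 on Icc
    have hmain := integral_le_sub_of_hasDerivWithinAt α β hαβ
      (fun s => -(2 * C₀ / K * (g s)⁻¹)) (fun s => -(2 * C₀ / K * (-g' s / g s ^ 2))) g
      (fun s hs => (((hg s hs).inv (ne_of_gt (hg0 s hs))).const_mul _).neg)
      hgc
      (by
        intro s hs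
        show g s ≤ -(2 * C₀ / K * (-g' s / g s ^ 2))
        have hgs := hg0 s hs
        have hk := key s hs
        rw [abs_of_pos (hposd s hs)] at hk
        rw [div_le_iff₀ (by positivity)] at hk
        rw [show -(2 * C₀ / K * (-g' s / g s ^ 2)) = 2 * C₀ * g' s / (K * g s ^ 2) by ring,
          le_div_iff₀ (by positivity)]
        nlinarith)
    refine hmain.trans (le_trans ?_ final)
    have h1 := hbound α (left_mem_Icc.mpr hαβ.le)
    have h2 := hinvpos β (right_mem_Icc.mpr hαβ.le)
    have hc : (0:ℝ) < 2 * C₀ / K := by positivity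
    nlinarith

/-- **Estimate on intervals where `|g|` is large.** If on `[α,β]` we have
`|g| > √(2C̃/K)`, `|g'| ≥ (K g² − C̃)/ℓ` and `|g| ℓ ≤ C₀` with `ℓ > 0`, then `g`
has constant sign, is strictly monotone, and
`∫_α^β |g| ≤ 2√2 C₀ / √(C̃ K)`. -/
theorem large_g_interval_estimate
    (K Ct C₀ : ℝ) (hK : 0 < K) (hCt : 0 < Ct) (hC₀ : 0 < C₀)
    (α β : ℝ) (hαβ : α < β)
    (g g' l : ℝ → ℝ)
    (hg : ∀ s ∈ Icc α β, HasDerivWithinAt g (g' s) (Icc α β) s)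
    (hl : ∀ s ∈ Icc α β, 0 < l s)
    (h1 : ∀ s ∈ Icc α β, Real.sqrt (2 * Ct / K) < |g s|)
    (h2 : ∀ s ∈ Icc α β, (K * g s ^ 2 - Ct) / l s ≤ |g' s|)
    (h3 : ∀ s ∈ Icc α β, |g s| * l s ≤ C₀) :
    ((∀ s ∈ Icc α β, 0 < g s) ∨ (∀ s ∈ Icc α β, g s < 0)) ∧
    (StrictMonoOn g (Icc α β) ∨ StrictAntiOn g (Icc α β)) ∧
    (∫ s in α..β, |g s|) ≤ 2 * Real.sqrt 2 * C₀ / Real.sqrt (Ct * K) := by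
  have hsqb : 0 < Real.sqrt (2 * Ct / K) := Real.sqrt_pos.mpr (by positivity)
  have hgne : ∀ s ∈ Icc α β, g s ≠ 0 := by
    intro s hs h0
    have := h1 s hs
    rw [h0, abs_zero] at this
    exact absurd this (not_lt.mpr hsqb.le)
  have hgc : ContinuousOn g (Icc α β) := fun s hs => (hg s hs).continuousWithinAt
  have huIcc : uIcc α β = Icc α β := uIcc_of_le hαβ.le
  have hαmem : α ∈ Icc α β := left_mem_Icc.mpr hαβ.le
  -- constant sign
  have hsign : (∀ s ∈ Icc α β, 0 < g s) ∨ (∀ s ∈ Icc α β, g s < 0) := by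
    have hsame : ∀ s ∈ Icc α β, ∀ t ∈ Icc α β, g s < 0 → 0 < g t → False := by
      intro s hs t ht hgs hgt
      have hsub : uIcc s t ⊆ Icc α β := uIcc_subset_Icc hs ht
      have : (0:ℝ) ∈ uIcc (g s) (g t) := by
        rw [mem_uIcc]; left; exact ⟨hgs.le, hgt.le⟩
      obtain ⟨c, hc, hc0⟩ := intermediate_value_uIcc (hgc.mono hsub) this
      exact hgne c (hsub hc) hc0
    rcases lt_or_gt_of_ne (hgne α hαmem) with hneg | hpos
    · right
      intro s hs
      rcases lt_or_gt_of_ne (hgne s hs) with h | h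
      · exact h
      · exact absurd (hsame α hαmem s hs hneg h) (fun h => h)
    · left
      intro s hs
      rcases lt_or_gt_of_ne (hgne s hs) with h | h
      · exact absurd (hsame s hs α hαmem h hpos) (fun h => h)
      · exact h
  -- g' never vanishes
  have hsq : ∀ s ∈ Icc α β, 2 * Ct / K < g s ^ 2 := by
    intro s hs
    have := h1 s hs
    nlinarith [Real.sq_sqrt (show (0:ℝ) ≤ 2 * Ct / K by positivity), abs_nonneg (g s),
      sq_abs (g s)]
  have hg'ne : ∀ s ∈ Icc α β, g' s ≠ 0 := by
    intro s hs
    have hls := hl s hs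
    have hCtlt : Ct < K * g s ^ 2 - Ct := by
      have := hsq s hs
      rw [div_lt_iff₀ hK] at this; nlinarith
    have : (0:ℝ) < |g' s| :=
      lt_of_lt_of_le (div_pos (by linarith) hls) (h2 s hs)
    exact abs_pos.mp this
  -- strict monotonicity
  have hmono : StrictMonoOn g (Icc α β) ∨ StrictAntiOn g (Icc α β) := by
    rcases hasDerivWithinAt_forall_lt_or_forall_gt_of_forall_ne (convex_Icc α β) hg
        (m := 0) hg'ne with hneg | hpos
    · right
      apply strictAntiOn_of_deriv_neg (convex_Icc α β) hgc
      intro x hx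
      rw [interior_Icc] at hx
      have hxI : x ∈ Icc α β := Ioo_subset_Icc_self hx
      rw [((hg x hxI).hasDerivAt (Icc_mem_nhds hx.1 hx.2)).deriv]
      exact hneg x hxI
    · left
      apply strictMonoOn_of_deriv_pos (convex_Icc α β) hgc
      intro x hx
      rw [interior_Icc] at hx
      have hxI : x ∈ Icc α β := Ioo_subset_Icc_self hx
      rw [((hg x hxI).hasDerivAt (Icc_mem_nhds hx.1 hx.2)).deriv]
      exact hpos x hxI
  refine ⟨hsign, hmono, ?_⟩
  rcases hsign with hpos | hneg
  · have heq : (∫ s in α..β, |g s|) = ∫ s in α..β, g s := by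
      apply intervalIntegral.integral_congr
      intro s hs
      rw [huIcc] at hs
      exact abs_of_pos (hpos s hs)
    rw [heq]
    exact aux_pos K Ct C₀ hK hCt hC₀ α β hαβ g g' l hg hl
      (fun s hs => by have := h1 s hs; rwa [abs_of_pos (hpos s hs)] at this)
      h2
      (fun s hs => by have := h3 s hs; rwa [abs_of_pos (hpos s hs)] at this)
  · have heq : (∫ s in α..β, |g s|) = ∫ s in α..β, -g s := by
      apply intervalIntegral.integral_congr
      intro s hs
      rw [huIcc] at hs
      exact abs_of_neg (hneg s hs)
    rw [heq]
    exact aux_pos K Ct C₀ hK hCt hC₀ α β hαβ (fun s => -g s) (fun s => -g' s) l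
      (fun s hs => (hg s hs).neg)
      hl
      (fun s hs => by have := h1 s hs; rwa [abs_of_neg (hneg s hs)] at this)
      (fun s hs => by simpa using h2 s hs)
      (fun s hs => by have := h3 s hs; rwa [abs_of_neg (hneg s hs)] at this)
end
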